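/- For any nontrivial finite group G, m(G) ≤ 1 + max{i(M) : M a maximal subgroup of G}. -/

import Mathlib

/-- A finite subset of a group is irredundant if no element lies in the
subgroup generated by the remaining elements. -/
def Irredundant {G : Type*} [Group G] (s : Finset G) : Prop :=
  ∀ g ∈ s, g ∉ Subgroup.closure ((s : Set G) \ {g})

/-- `mRank G` : maximal size of an irredundant generating set of `G`. -/
noncomputable def mRank (G : Type*) [Group G] : ℕ :=
  sSup {n | ∃ s : Finset G, Irredundant s ∧ Subgroup.closure (s : Set G) = ⊤ ∧ s.card = n}

/-- `iRank G` : maximal size of an irredundant subset of `G`. -/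
noncomputable def iRank (G : Type*) [Group G] : ℕ :=
  sSup {n | ∃ s : Finset G, Irredundant s ∧ s.card = n}

/-- A family of subgroups is in general position. -/
def GenPos {G : Type*} [Group G] {ι : Type*} (H : ι → Subgroup G) : Prop :=
  ∀ I J : Finset ι, I ⊂ J → (⨅ j ∈ J, H j) < (⨅ i ∈ I, H i)

/-- Maximal size of a family of maximal subgroups in general position. -/
noncomputable def MaxDim (G : Type*) [Group G] : ℕ :=
  sSup {k | ∃ M : Fin k → Subgroup G, (∀ j, IsCoatom (M j)) ∧ GenPos M}

lemma mem_closure_subtype {G : Type*} [Group G] (H : Subgroup G) (T : Set ↥H) (x : ↥H) :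
    x ∈ Subgroup.closure T ↔ (x : G) ∈ Subgroup.closure ((↑) '' T : Set G) := by
  have h : Subgroup.closure ((↑) '' T : Set G) = (Subgroup.closure T).map H.subtype := by
    rw [MonoidHom.map_closure]; rfl
  rw [h]
  constructor
  · intro hx; exact Subgroup.mem_map_of_mem _ hx
  · intro hx
    rcases Subgroup.mem_map.mp hx with ⟨y, hy, hyx⟩
    have : y = x := Subtype.ext hyx
    rwa [this] at hy

theorem stmt5 {G : Type*} [Group G] [Finite G] [Nontrivial G] :
    mRank G ≤ 1 + sSup {n | ∃ M : Subgroup G, IsCoatom M ∧ n = iRank M} := by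
  classical
  have : Fintype G := Fintype.ofFinite G
  apply csSup_le'
  rintro n ⟨s, hirr, hgen, hcard⟩
  -- s is nonempty
  have hsne : s.Nonempty := by
    rcases Finset.eq_empty_or_nonempty s with rfl | h
    · exfalso
      simp only [Finset.coe_empty, Subgroup.closure_empty] at hgen
      exact bot_ne_top hgen
    · exact h
  obtain ⟨g, hg⟩ := hsne
  set t := s.erase g with ht
  have hts : (t : Set G) = (s : Set G) \ {g} := by
    simp [ht, Finset.coe_erase]
  have hproper : Subgroup.closure (t : Set G) ≠ ⊤ := by
    intro h
    apply hirr g hg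
    rw [← hts, h]
    trivial
  obtain ⟨M, hM, hle⟩ :=
    (IsCoatomic.eq_top_or_exists_le_coatom (Subgroup.closure (t : Set G))).resolve_left hproper
  have hsub : ∀ x ∈ t, x ∈ M := fun x hx =>
    hle (Subgroup.subset_closure hx)
  -- build the finset in M
  set t' : Finset ↥M := t.attach.map
    ⟨fun x => (⟨x.1, hsub x.1 x.2⟩ : ↥M), fun a b hab => by have h := congrArg (fun y : ↥M => (y : G)) hab; exact Subtype.ext h⟩
    with ht'
  have hcard' : t'.card = t.card := by simp [ht']
  have himg : ∀ x : ↥M, x ∈ t' → ((↑) '' ((t' : Set ↥M) \ {x}) : Set G) ⊆ (s : Set G) \ {(x : G)} := by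
    intro x hx y hy
    rcases hy with ⟨z, ⟨hz1, hz2⟩, rfl⟩
    simp only [ht', Finset.coe_map, Finset.mem_coe, Set.mem_image, Finset.mem_coe,
      Finset.mem_map, Finset.mem_attach, Function.Embedding.coeFn_mk] at hz1
    rcases hz1 with ⟨w, hw, rfl⟩
    rcases hw with ⟨w, -, rfl⟩
    constructor
    · exact Finset.mem_of_mem_erase w.2
    · intro hzy
      apply hz2
      simp only [Set.mem_singleton_iff] at hzy ⊢
      exact Subtype.ext hzy
  have hirr' : Irredundant t' := by
    intro x hx hmem
    rw [mem_closure_subtype] at hmem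
    have hxs : (x : G) ∈ s := by
      have : (x : G) ∈ t := by
        simp only [ht', Finset.mem_map, Finset.mem_attach, Function.Embedding.coeFn_mk] at hx
        rcases hx with ⟨w, -, rfl⟩
        exact w.2
      exact Finset.mem_of_mem_erase this
    exact hirr (x : G) hxs (Subgroup.closure_mono (himg x hx) hmem)
  -- bounds
  have hFM : Fintype ↥M := Fintype.ofFinite _
  have hbdd : ∀ k ∈ {n | ∃ s : Finset ↥M, Irredundant s ∧ s.card = n}, k ≤ Fintype.card ↥M := by
    rintro k ⟨u, -, rfl⟩
    exact Finset.card_le_univ u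
  have h1 : t.card ≤ iRank ↥M := by
    rw [← hcard']
    exact le_csSup ⟨Fintype.card ↥M, hbdd⟩ ⟨t', hirr', rfl⟩
  have hbdd2 : BddAbove {n | ∃ M : Subgroup G, IsCoatom M ∧ n = iRank ↥M} := by
    refine ⟨Fintype.card G, ?_⟩
    rintro k ⟨N, -, rfl⟩
    have hFN : Fintype ↥N := Fintype.ofFinite _
    have : iRank ↥N ≤ Fintype.card ↥N := by
      apply csSup_le'
      rintro k ⟨u, -, rfl⟩
      exact Finset.card_le_univ u
    exact this.trans (Fintype.card_le_of_injective _ Subtype.val_injective)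
  have h2 : iRank ↥M ≤ sSup {n | ∃ M : Subgroup G, IsCoatom M ∧ n = iRank ↥M} :=
    le_csSup hbdd2 ⟨M, hM, rfl⟩
  have hpos : 1 ≤ s.card := Finset.card_pos.mpr ⟨g, hg⟩
  have htc : t.card = s.card - 1 := Finset.card_erase_of_mem hg
  omega
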